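/- Let ξ₁, …, ξ_n be i.i.d. Bernoulli(q) random variables with q ∈ [0, 1], let V_k = Σ_{j=1}^k ξ_j and Ṽ_k = k − V_k, and let M ≥ 1 be a real number. Then the process M_k = V_k / (M + Ṽ_k) is a supermartingale in reverse time with respect to the reverse filtration G_k = σ(V_j : k ≤ j ≤ n): for every 1 ≤ k ≤ n − 1, E[ V_k / (M + k − V_k) | G_{k+1} ] ≤ V_{k+1} / (M + (k+1) − V_{k+1}) almost surely. -/

import Mathlib

open MeasureTheory ProbabilityTheory Finset

/-- `V_k = Σ_{j=1}^k ξ_j`: the number of successes among the first `k` of the `ξ_j`. -/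
def Vcount {Ω : Type*} {n : ℕ} (ξ : Fin n → Ω → Bool) (k : ℕ) (ω : Ω) : ℕ :=
  (Finset.univ.filter (fun j : Fin n => (j : ℕ) < k ∧ ξ j ω = true)).card

/-- The reverse filtration `G_k = σ(V_j : k ≤ j ≤ n)`. -/
def revFilt {Ω : Type*} [MeasurableSpace Ω] {n : ℕ} (ξ : Fin n → Ω → Bool) (k : ℕ) :
    MeasurableSpace Ω :=
  ⨆ j ∈ Finset.Icc k n, MeasurableSpace.comap (fun ω => Vcount ξ j ω) inferInstance

/-- counting function on the canonical space -/
def cntB (n m : ℕ) (x : Fin n → Bool) : ℕ :=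
  (Finset.univ.filter (fun j : Fin n => (j : ℕ) < m ∧ x j = true)).card

lemma Vcount_eq_comp {Ω : Type*} {n : ℕ} (ξ : Fin n → Ω → Bool) (m : ℕ) :
    Vcount ξ m = fun ω => cntB n m (fun i => ξ i ω) := rfl

lemma measurable_Vcount {Ω : Type*} [MeasurableSpace Ω] {n : ℕ} (ξ : Fin n → Ω → Bool)
    (hmeas : ∀ i, Measurable (ξ i)) (m : ℕ) : Measurable (Vcount ξ m) := by
  rw [Vcount_eq_comp]
  exact (measurable_of_finite (cntB n m)).comp (measurable_pi_lambda _ hmeas)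

/-- the σ-algebra on the canonical space -/
def bigG (n m : ℕ) : MeasurableSpace (Fin n → Bool) :=
  ⨆ j ∈ Finset.Icc m n, MeasurableSpace.comap (cntB n j) inferInstance

lemma revFilt_eq_comap {Ω : Type*} [MeasurableSpace Ω] {n : ℕ} (ξ : Fin n → Ω → Bool) (m : ℕ) :
    revFilt ξ m = MeasurableSpace.comap (fun ω i => ξ i ω) (bigG n m) := by
  unfold revFilt bigG
  simp_rw [MeasurableSpace.comap_iSup, MeasurableSpace.comap_comp]
  rfl

lemma revFilt_le {Ω : Type*} [mΩ : MeasurableSpace Ω] {n : ℕ} (ξ : Fin n → Ω → Bool)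
    (hmeas : ∀ i, Measurable (ξ i)) (m : ℕ) : revFilt ξ m ≤ mΩ := by
  refine iSup₂_le fun j _ => ?_
  exact (measurable_Vcount ξ hmeas j).comap_le

lemma Vcount_le {Ω : Type*} {n : ℕ} (ξ : Fin n → Ω → Bool) (m : ℕ) (ω : Ω) :
    Vcount ξ m ω ≤ m := by
  classical
  have : ∀ j ∈ (Finset.univ.filter (fun j : Fin n => (j : ℕ) < m ∧ ξ j ω = true)),
      (j : ℕ) ∈ Finset.range m := by
    intro j hj
    simp only [Finset.mem_filter] at hj
    exact Finset.mem_range.2 hj.2.1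
  calc (Finset.univ.filter (fun j : Fin n => (j : ℕ) < m ∧ ξ j ω = true)).card
      ≤ (Finset.range m).card :=
        Finset.card_le_card_of_injOn (fun j => (j : ℕ)) this
          (fun a _ b _ h => Fin.ext h)
    _ = m := Finset.card_range m

lemma cntB_le (n m : ℕ) (x : Fin n → Bool) : cntB n m x ≤ m :=
  Vcount_le (fun i (_ : Unit) => x i) m ()


lemma cntB_succ {n k : ℕ} (hK : k < n) (x : Fin n → Bool) :
    cntB n (k + 1) x = cntB n k x + (if x ⟨k, hK⟩ = true then 1 else 0) := by
  classical
  unfold cntB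
  rw [Finset.card_filter, Finset.card_filter]
  have : ∀ j : Fin n,
      (if (j : ℕ) < k + 1 ∧ x j = true then 1 else 0)
        = (if (j : ℕ) < k ∧ x j = true then 1 else 0)
          + (if j = ⟨k, hK⟩ then (if x j = true then 1 else 0) else 0) := by
    intro j
    by_cases hj : j = ⟨k, hK⟩
    · subst hj
      simp [Nat.lt_succ_iff]
    · have hjk : (j : ℕ) ≠ k := fun h => hj (Fin.ext h)
      have : ((j : ℕ) < k + 1) ↔ ((j : ℕ) < k) := by omega
      simp [hj, this]
  rw [Finset.sum_congr rfl (fun j _ => this j), Finset.sum_add_distrib,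
    Finset.sum_ite_eq' Finset.univ (⟨k, hK⟩ : Fin n) (fun j => if x j = true then 1 else 0)]
  simp

lemma card_filter_lt {n m : ℕ} (h : m ≤ n) :
    (Finset.univ.filter (fun j : Fin n => (j : ℕ) < m)).card = m := by
  classical
  have e : Finset.univ.filter (fun j : Fin n => (j : ℕ) < m)
      = Finset.map (Fin.castLEEmb h) Finset.univ := by
    ext j
    simp only [Finset.mem_filter, Finset.mem_map, Finset.mem_univ, true_and]
    constructor
    · intro hj; exact ⟨⟨(j : ℕ), hj⟩, rfl⟩
    · rintro ⟨i, rfl⟩; exact i.isLt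
  rw [e, Finset.card_map, Finset.card_univ, Fintype.card_fin]

lemma cntB_cast_sum (n m : ℕ) (x : Fin n → Bool) :
    (cntB n m x : ℝ) = ∑ j ∈ Finset.univ.filter (fun j : Fin n => (j : ℕ) < m),
      (if x j = true then (1 : ℝ) else 0) := by
  classical
  unfold cntB
  rw [← Finset.filter_filter, Finset.card_filter]
  push_cast
  rfl

lemma cntB_swap {n m : ℕ} (j K : Fin n) (hj : (j : ℕ) < m) (hK : (K : ℕ) < m)
    (x : Fin n → Bool) :
    cntB n m (x ∘ Equiv.swap j K) = cntB n m x := by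
  classical
  unfold cntB
  have hmem : ∀ i : Fin n, ((Equiv.swap j K i : Fin n) : ℕ) < m ↔ (i : ℕ) < m := by
    intro i
    rcases eq_or_ne i j with rfl | hij
    · simp [Equiv.swap_apply_left, hj, hK]
    · rcases eq_or_ne i K with rfl | hiK
      · simp [Equiv.swap_apply_right, hj, hK]
      · rw [Equiv.swap_apply_of_ne_of_ne hij hiK]
  refine Finset.card_bij' (fun i _ => Equiv.swap j K i) (fun i _ => Equiv.swap j K i)
    ?_ ?_ ?_ ?_
  · intro i hi
    simp only [Finset.mem_filter, Finset.mem_univ, true_and, Function.comp_apply] at hi ⊢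
    exact ⟨(hmem i).2 hi.1, by simpa [Equiv.swap_apply_self] using hi.2⟩
  · intro i hi
    simp only [Finset.mem_filter, Finset.mem_univ, true_and, Function.comp_apply] at hi ⊢
    refine ⟨(hmem i).2 hi.1, ?_⟩
    simpa using hi.2
  · intro i _; simp [Equiv.swap_apply_self]
  · intro i _; simp [Equiv.swap_apply_self]


lemma key_ineq (M : ℝ) (hM : 1 ≤ M) (k v : ℕ) (hv : v ≤ k + 1) :
    ((v : ℝ) / (k + 1)) * (((v : ℝ) - 1) / (M + k - ((v : ℝ) - 1)))
      + (1 - (v : ℝ) / (k + 1)) * ((v : ℝ) / (M + k - v))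
    ≤ (v : ℝ) / (M + (k + 1) - v) := by
  have hk1 : (0 : ℝ) < (k : ℝ) + 1 := by positivity
  rcases Nat.eq_zero_or_pos v with rfl | hv1
  · simp
  · have hr1 : (1 : ℝ) ≤ (v : ℝ) := by exact_mod_cast hv1
    have hrk : (v : ℝ) ≤ (k : ℝ) + 1 := by exact_mod_cast hv
    have hA : (0 : ℝ) < M + (k + 1) - v := by linarith
    have hA' : M + (k : ℝ) - ((v : ℝ) - 1) = M + ((k : ℝ) + 1) - v := by ring
    have hBnn : (0 : ℝ) ≤ M + k - v := by linarith
    rcases eq_or_lt_of_le hBnn with hB0 | hB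
    · -- M + k - v = 0 : then v = k+1 (since v ≤ k+1, M ≥ 1) and second term vanishes
      have hvk : (v : ℝ) = (k : ℝ) + 1 := by nlinarith
      have hM1 : M = 1 := by linarith [hvk ▸ hB0.symm]
      rw [← hB0, div_zero, mul_zero, add_zero, hA']
      have : (v : ℝ) / ((k : ℝ) + 1) = 1 := by rw [hvk, div_self (ne_of_gt hk1)]
      rw [this, one_mul]
      gcongr
      linarith
    · have e : (v : ℝ) / (M + (k + 1) - v)
          - (((v : ℝ) / (k + 1)) * (((v : ℝ) - 1) / (M + k - ((v : ℝ) - 1)))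
            + (1 - (v : ℝ) / (k + 1)) * ((v : ℝ) / (M + k - v)))
          = (v : ℝ) * (M - 1) / (((k : ℝ) + 1) * (M + (k + 1) - v) * (M + k - v)) := by
        rw [hA']
        field_simp
        ring
      have hnn : (0 : ℝ) ≤ (v : ℝ) * (M - 1)
          / (((k : ℝ) + 1) * (M + (k + 1) - v) * (M + k - v)) := by
        apply div_nonneg
        · apply mul_nonneg (by positivity); linarith
        · positivity
      linarith [e ▸ hnn]



lemma bigG_le (n m : ℕ) : bigG n m ≤ MeasurableSpace.pi := by
  refine iSup₂_le fun i _ => ?_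
  exact (measurable_of_finite (cntB n i)).comap_le

lemma bigG_invariant {n m : ℕ} (j K : Fin n) (hj : (j : ℕ) < m) (hK : (K : ℕ) < m)
    {B : Set (Fin n → Bool)} (hB : MeasurableSet[bigG n m] B) :
    (fun x => x ∘ Equiv.swap j K) ⁻¹' B = B := by
  set T : (Fin n → Bool) → (Fin n → Bool) := fun x => x ∘ Equiv.swap j K with hT
  let mInv : MeasurableSpace (Fin n → Bool) :=
    { MeasurableSet' := fun s => T ⁻¹' s = s
      measurableSet_empty := by simp
      measurableSet_compl := fun s hs => by
        show T ⁻¹' sᶜ = sᶜ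
        rw [Set.preimage_compl]; exact congrArg _ hs
      measurableSet_iUnion := fun f hf => by
        show T ⁻¹' (⋃ i, f i) = ⋃ i, f i
        rw [Set.preimage_iUnion]; exact Set.iUnion_congr hf }
  have hle : bigG n m ≤ mInv := by
    refine iSup₂_le fun i hi => ?_
    rintro s ⟨A, hA, rfl⟩
    show T ⁻¹' (cntB n i ⁻¹' A) = cntB n i ⁻¹' A
    have hmi : m ≤ i := (Finset.mem_Icc.1 hi).1
    have hc : cntB n i ∘ T = cntB n i :=
      funext fun x => cntB_swap j K (lt_of_lt_of_le hj hmi) (lt_of_lt_of_le hK hmi) x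
    rw [← Set.preimage_comp, hc]
  exact hle B hB

lemma map_map_swap {Ω : Type*} [MeasurableSpace Ω] (P : Measure Ω) [IsProbabilityMeasure P]
    {n : ℕ} (q : ℝ) (ξ : Fin n → Ω → Bool) (hmeas : ∀ i, Measurable (ξ i))
    (hindep : iIndepFun ξ P)
    (hbern : ∀ i, P {ω | ξ i ω = true} = ENNReal.ofReal q)
    (j K : Fin n) :
    (P.map (fun ω i => ξ i ω)).map (fun x => x ∘ Equiv.swap j K)
      = P.map (fun ω i => ξ i ω) := by
  classical
  have hΞ : Measurable (fun ω i => ξ i ω) := measurable_pi_lambda _ hmeas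
  have hT : Measurable (fun x : Fin n → Bool => x ∘ Equiv.swap j K) :=
    measurable_of_finite _
  have hmass : ∀ y : Fin n → Bool, (P.map (fun ω i => ξ i ω)) {y}
      = ∏ i : Fin n, (if y i then ENNReal.ofReal q else 1 - ENNReal.ofReal q) := by
    intro y
    rw [Measure.map_apply hΞ (measurableSet_singleton y)]
    have hpre2 : (fun ω i => ξ i ω) ⁻¹' {y} = ⋂ i ∈ Finset.univ, ξ i ⁻¹' {y i} := by
      ext ω
      simp [funext_iff]
    rw [hpre2,
      hindep.measure_inter_preimage_eq_mul Finset.univ (fun i _ => measurableSet_singleton _)]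
    refine Finset.prod_congr rfl fun i _ => ?_
    have htrue : ξ i ⁻¹' {true} = {ω | ξ i ω = true} := by ext ω; simp
    cases hb : y i
    · have hfalse : ξ i ⁻¹' {false} = {ω | ξ i ω = true}ᶜ := by
        ext ω; simp
      have hms : MeasurableSet {ω | ξ i ω = true} := by
        rw [← htrue]; exact hmeas i (measurableSet_singleton true)
      simp only [hfalse, Bool.false_eq_true, if_false]
      rw [prob_compl_eq_one_sub hms, hbern i]
    · simp only [htrue, if_true]
      exact hbern i
  refine Measure.ext_of_singleton fun x => ?_
  rw [Measure.map_apply hT (measurableSet_singleton x)]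
  have hpre : (fun x : Fin n → Bool => x ∘ Equiv.swap j K) ⁻¹' {x}
      = {x ∘ Equiv.swap j K} := by
    ext y
    simp only [Set.mem_preimage, Set.mem_singleton_iff]
    constructor
    · intro h
      funext i
      have := congrFun h (Equiv.swap j K i)
      simpa [Function.comp, Equiv.swap_apply_self] using this
    · rintro rfl
      funext i
      simp [Function.comp, Equiv.swap_apply_self]
  rw [hpre, hmass, hmass]
  exact Equiv.prod_comp (Equiv.swap j K)
    (fun i => if x i then ENNReal.ofReal q else 1 - ENNReal.ofReal q)

/-- `M_k = V_k/(M + Ṽ_k)` with `Ṽ_k = k − V_k` is a supermartingale in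
reverse time: `E[V_k/(M + k − V_k) | G_{k+1}] ≤ V_{k+1}/(M + (k+1) − V_{k+1})` a.s. -/
theorem stmt14 {Ω : Type*} [MeasurableSpace Ω] (P : Measure Ω) [IsProbabilityMeasure P]
    (n : ℕ) (hn : 1 ≤ n) (q : ℝ) (hq : q ∈ Set.Icc (0 : ℝ) 1)
    (ξ : Fin n → Ω → Bool) (hmeas : ∀ i, Measurable (ξ i))
    (hindep : iIndepFun ξ P)
    (hbern : ∀ i, P {ω | ξ i ω = true} = ENNReal.ofReal q)
    (M : ℝ) (hM : 1 ≤ M)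
    (k : ℕ) (hk1 : 1 ≤ k) (hk2 : k ≤ n - 1) :
    P[fun ω => (Vcount ξ k ω : ℝ) / (M + k - Vcount ξ k ω) | revFilt ξ (k + 1)]
      ≤ᵐ[P] fun ω => (Vcount ξ (k + 1) ω : ℝ) / (M + (k + 1) - Vcount ξ (k + 1) ω) := by
  classical
  have hkn : k + 1 ≤ n := by omega
  have hKlt : k < n := by omega
  have hΞ : Measurable (fun ω i => ξ i ω : Ω → Fin n → Bool) := measurable_pi_lambda _ hmeas
  set μ : Measure (Fin n → Bool) := P.map (fun ω i => ξ i ω) with hμdef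
  haveI : IsProbabilityMeasure μ := Measure.isProbabilityMeasure_map hΞ.aemeasurable
  set K : Fin n := ⟨k, hKlt⟩ with hKdef
  -- helper real functions
  set f1 : ℕ → ℝ := fun c => ((c : ℝ) - 1) / (M + k - ((c : ℝ) - 1)) with hf1
  set f0 : ℕ → ℝ := fun c => (c : ℝ) / (M + k - (c : ℝ)) with hf0
  set φ : ℕ → ℝ := fun c => ((c : ℝ) / (k + 1)) * f1 c + (1 - (c : ℝ) / (k + 1)) * f0 c with hφ
  set X' : (Fin n → Bool) → ℝ :=
    fun x => if x K = true then f1 (cntB n (k + 1) x) else f0 (cntB n (k + 1) x) with hX'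
  have hGle : revFilt ξ (k + 1) ≤ ‹MeasurableSpace Ω› := revFilt_le ξ hmeas (k + 1)
  -- X = X' ∘ Ξ
  have hXcomp : ∀ ω, (Vcount ξ k ω : ℝ) / (M + k - Vcount ξ k ω)
      = X' (fun i => ξ i ω) := by
    intro ω
    have hsucc := cntB_succ hKlt (fun i => ξ i ω)
    have hVk : Vcount ξ k ω = cntB n k (fun i => ξ i ω) := by
      rw [Vcount_eq_comp]
    by_cases hb : ξ K ω = true
    · have : cntB n (k + 1) (fun i => ξ i ω) = cntB n k (fun i => ξ i ω) + 1 := by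
        rw [hsucc]; simp [show ξ ⟨k, hKlt⟩ ω = true from hb]
      simp only [hX', hKdef, hb, show ξ ⟨k, hKlt⟩ ω = true from hb, if_true, this, hf1, ← hVk]
      push_cast
      ring_nf
    · have : cntB n (k + 1) (fun i => ξ i ω) = cntB n k (fun i => ξ i ω) := by
        rw [hsucc]; simp [show ¬ ξ ⟨k, hKlt⟩ ω = true from hb]
      simp only [hX', hKdef, hb, show ¬ ξ ⟨k, hKlt⟩ ω = true from hb, if_false, this, hf0, ← hVk]
      simp
  -- Z and its properties
  set Z : Ω → ℝ := fun ω => φ (Vcount ξ (k + 1) ω) with hZdef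
  have hZcomp : Z = fun ω => φ (cntB n (k + 1) (fun i => ξ i ω)) := by
    funext ω; rw [hZdef, Vcount_eq_comp]
  -- measurability of Z wrt revFilt
  have hVG : Measurable[revFilt ξ (k + 1)] (Vcount ξ (k + 1)) := by
    apply Measurable.of_comap_le
    exact le_iSup₂ (f := fun j (_ : j ∈ Finset.Icc (k+1) n) =>
        MeasurableSpace.comap (fun ω => Vcount ξ j ω) inferInstance)
      (k + 1) (Finset.mem_Icc.2 ⟨le_refl _, hkn⟩)
  have hZm : AEStronglyMeasurable[revFilt ξ (k + 1)] Z P := by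
    refine StronglyMeasurable.aestronglyMeasurable ?_
    exact (Measurable.stronglyMeasurable ((measurable_of_countable φ).comp hVG))
  -- integrability
  have hXint : Integrable (fun ω => (Vcount ξ k ω : ℝ) / (M + k - Vcount ξ k ω)) P := by
    have h1 : Integrable X' μ := .of_finite
    have := (integrable_map_measure h1.aestronglyMeasurable hΞ.aemeasurable).1 h1
    refine this.congr (Filter.Eventually.of_forall fun ω => ?_)
    exact (hXcomp ω).symm
  have hZint : Integrable Z P := by
    have h1 : Integrable (fun x => φ (cntB n (k + 1) x)) μ := .of_finite
    have := (integrable_map_measure h1.aestronglyMeasurable hΞ.aemeasurable).1 h1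
    refine this.congr (Filter.Eventually.of_forall fun ω => ?_)
    rw [hZcomp]
    rfl
  -- the set-integral identity
  have hsetEq : ∀ s, MeasurableSet[revFilt ξ (k + 1)] s → P s < ⊤ →
      ∫ ω in s, Z ω ∂P = ∫ ω in s, (Vcount ξ k ω : ℝ) / (M + k - Vcount ξ k ω) ∂P := by
    intro s hs _
    rw [revFilt_eq_comap] at hs
    obtain ⟨B, hB, rfl⟩ := hs
    have hBms : MeasurableSet B := bigG_le n (k + 1) B hB
    set c : (Fin n → Bool) → ℕ := fun x => cntB n (k + 1) x with hc
    set h : ℕ → ℝ := fun m => f1 m - f0 m with hh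
    -- transfer both sides to μ
    have hZside : ∫ ω in (fun ω i => ξ i ω) ⁻¹' B, Z ω ∂P = ∫ x in B, φ (c x) ∂μ := by
      rw [hμdef, setIntegral_map hBms (measurable_of_finite _).aestronglyMeasurable
        hΞ.aemeasurable]
      rw [hZcomp]
    have hXside : ∫ ω in (fun ω i => ξ i ω) ⁻¹' B,
        (Vcount ξ k ω : ℝ) / (M + k - Vcount ξ k ω) ∂P = ∫ x in B, X' x ∂μ := by
      rw [hμdef, setIntegral_map hBms (measurable_of_finite _).aestronglyMeasurable
        hΞ.aemeasurable]
      exact setIntegral_congr_fun (hΞ hBms) fun ω _ => hXcomp ω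
    rw [hZside, hXside]
    -- the heart : ∫_B φ(c) dμ = ∫_B X' dμ
    have hKlt1 : (K : ℕ) < k + 1 := Nat.lt_succ_self k
    have hswap : ∀ j : Fin n, (j : ℕ) < k + 1 →
        ∫ x in B, (if x j = true then (1 : ℝ) else 0) * h (c x) ∂μ
          = ∫ x in B, (if x K = true then (1 : ℝ) else 0) * h (c x) ∂μ := by
      intro j hj
      have hinv := bigG_invariant j K hj hKlt1 hB
      have hmp : μ.map (fun x => x ∘ Equiv.swap j K) = μ :=
        map_map_swap P q ξ hmeas hindep hbern j K
      conv_lhs => rw [← hmp]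
      rw [setIntegral_map hBms (measurable_of_finite _).aestronglyMeasurable
        (measurable_of_finite _).aemeasurable, hinv]
      refine setIntegral_congr_fun hBms fun x _ => ?_
      have h1 : (x ∘ Equiv.swap j K) j = x K := by simp
      have h2 : c (x ∘ Equiv.swap j K) = c x := cntB_swap j K hj hKlt1 x
      simp only [h1, h2]
    set S := Finset.univ.filter (fun j : Fin n => (j : ℕ) < k + 1) with hS
    have hcard : S.card = k + 1 := card_filter_lt hkn
    have hsum : (fun x => ((c x : ℝ)) * h (c x))
        = fun x => ∑ j ∈ S, (if x j = true then (1 : ℝ) else 0) * h (c x) := by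
      funext x
      rw [← Finset.sum_mul, ← cntB_cast_sum]
    have hsum2 : ∫ x in B, ((c x : ℝ)) * h (c x) ∂μ
        = ((k : ℝ) + 1) * ∫ x in B, (if x K = true then (1 : ℝ) else 0) * h (c x) ∂μ := by
      rw [hsum, integral_finset_sum S (fun j _ => Integrable.of_finite)]
      rw [Finset.sum_congr rfl (fun j hj => hswap j (by simpa [hS] using hj))]
      rw [Finset.sum_const, hcard, nsmul_eq_mul]
      push_cast
      ring
    have hXdecomp : X' = fun x =>
        (if x K = true then (1 : ℝ) else 0) * h (c x) + f0 (c x) := by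
      funext x
      by_cases hb : x K = true <;> simp [hX', hb, hh, hc] <;> ring
    have hZdecomp : (fun x => φ (c x)) = fun x =>
        ((c x : ℝ) / (k + 1)) * h (c x) + f0 (c x) := by
      funext x
      simp only [hφ, hh]
      ring
    have hk1ne : ((k : ℝ) + 1) ≠ 0 := by positivity
    rw [hZdecomp, hXdecomp]
    rw [integral_add Integrable.of_finite Integrable.of_finite,
      integral_add Integrable.of_finite Integrable.of_finite]
    congr 1
    have : (fun x => ((c x : ℝ) / (k + 1)) * h (c x))
        = fun x => (1 / ((k : ℝ) + 1)) * (((c x : ℝ)) * h (c x)) := by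
      funext x; ring
    rw [this, integral_const_mul, hsum2]
    field_simp
  -- conclude via uniqueness of conditional expectation
  have hcond : Z =ᵐ[P]
      P[fun ω => (Vcount ξ k ω : ℝ) / (M + k - Vcount ξ k ω) | revFilt ξ (k + 1)] := by
    haveI : SigmaFinite (P.trim hGle) := by
      have : IsFiniteMeasure (P.trim hGle) := isFiniteMeasure_trim hGle
      infer_instance
    exact ae_eq_condExp_of_forall_setIntegral_eq hGle hXint
      (fun s _ _ => hZint.integrableOn) hsetEq hZm
  have hZY : ∀ ω, Z ω ≤ (Vcount ξ (k + 1) ω : ℝ)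
      / (M + (k + 1) - Vcount ξ (k + 1) ω) := by
    intro ω
    have := key_ineq M hM k (Vcount ξ (k + 1) ω) (Vcount_le ξ (k + 1) ω)
    simpa [hZdef, hφ, hf1, hf0] using this
  filter_upwards [hcond] with ω hω
  rw [← hω]
  exact hZY ω
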